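/- Let G be a connected unicyclic graph (a connected graph whose number of edges equals its number of vertices) whose unique cycle has odd length (equivalently, G is not bipartite). Then for every matrix A ∈ S(G), at least one of the smallest eigenvalue and the largest eigenvalue of A is simple (has multiplicity 1). -/

import Mathlib

open Matrix

/-- The geometric multiplicity of `lam` as an eigenvalue of `A`:
`dim ker (A - lam • I)`. -/
noncomputable def multOf {m : Type*} [Fintype m] [DecidableEq m]
    (A : Matrix m m ℝ) (lam : ℝ) : ℕ :=
  Module.finrank ℝ (LinearMap.ker (A - lam • (1 : Matrix m m ℝ)).mulVecLin)

/-- The Strong Spectral Property. -/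
def HasSSP {m : Type*} [Fintype m] [DecidableEq m] (A : Matrix m m ℝ) : Prop :=
  ∀ X : Matrix m m ℝ, X.IsSymm → Matrix.hadamard A X = 0 →
    Matrix.hadamard (1 : Matrix m m ℝ) X = 0 → A * X - X * A = 0 → X = 0

/-- `A ∈ S(G)`: `A` is symmetric and its off-diagonal nonzero pattern is given by `G`. -/
def InS {m : Type*} [Fintype m] [DecidableEq m]
    (G : SimpleGraph m) (A : Matrix m m ℝ) : Prop :=
  A.IsSymm ∧ ∀ i j, i ≠ j → (A i j ≠ 0 ↔ G.Adj i j)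


lemma multOf_pos_iff {m : Type*} [Fintype m] [DecidableEq m] (A : Matrix m m ℝ) (t : ℝ) :
    1 ≤ multOf A t ↔ ∃ v : m → ℝ, v ≠ 0 ∧ (A - t • 1) *ᵥ v = 0 := by
  rw [multOf, Submodule.one_le_finrank_iff, Submodule.ne_bot_iff]
  constructor
  · rintro ⟨v, hv, hv0⟩
    exact ⟨v, hv0, by simpa [Matrix.mulVecLin_apply, sub_mulVec, smul_mulVec, one_mulVec] using hv⟩
  · rintro ⟨v, hv0, hv⟩
    exact ⟨v, by simpa [LinearMap.mem_ker, Matrix.mulVecLin_apply, sub_mulVec, smul_mulVec, one_mulVec] using hv, hv0⟩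

lemma multOf_conj {m : Type*} [Fintype m] [DecidableEq m]
    (A : Matrix m m ℝ) (dd : m → ℝ) (hd : ∀ i, dd i * dd i = 1)
    (ε : ℝ) (hε : ε * ε = 1) (t : ℝ) :
    multOf (ε • (diagonal dd * A * diagonal dd)) (ε * t) = multOf A t := by
  have hε0 : ε ≠ 0 := fun h => by simp [h] at hε
  have hDD : diagonal dd * diagonal dd = 1 := by
    rw [diagonal_mul_diagonal]
    convert diagonal_one using 2
    exact funext fun i => hd i
  have hmat : ε • (diagonal dd * A * diagonal dd) - (ε * t) • (1 : Matrix m m ℝ)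
      = ε • (diagonal dd * (A - t • 1) * diagonal dd) := by
    rw [Matrix.mul_sub, Matrix.sub_mul, smul_sub]
    congr 1
    rw [mul_smul ε t]
    congr 1
    rw [Matrix.mul_smul, Matrix.smul_mul, Matrix.mul_one, hDD]
  rw [multOf, multOf, hmat]
  -- kernel equality
  set D := diagonal dd with hD
  have hDinv : ∀ v : m → ℝ, D *ᵥ (D *ᵥ v) = v := by
    intro v
    rw [mulVec_mulVec, hDD, one_mulVec]
  let e : (m → ℝ) ≃ₗ[ℝ] (m → ℝ) := LinearEquiv.ofInvolutive D.mulVecLin (fun v => by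
    simp only [Matrix.mulVecLin_apply]; exact hDinv v)
  have hker : LinearMap.ker (ε • (D * (A - t • 1) * D)).mulVecLin
      = Submodule.comap (e : (m → ℝ) →ₗ[ℝ] (m → ℝ)) (LinearMap.ker (A - t • 1).mulVecLin) := by
    ext v
    simp only [LinearMap.mem_ker, Submodule.mem_comap, Matrix.mulVecLin_apply]
    have he : (e : (m → ℝ) →ₗ[ℝ] (m → ℝ)) v = D *ᵥ v := rfl
    rw [he]
    constructor
    · intro h
      have h2 : D *ᵥ ((A - t • 1) *ᵥ (D *ᵥ v)) = 0 := by
        have := congrArg (fun w => ε⁻¹ • w) h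
        simp only [Matrix.smul_mulVec, smul_smul, inv_mul_cancel₀ hε0, one_smul,
          smul_zero] at this
        rw [Matrix.mul_assoc, ← Matrix.mulVec_mulVec, ← Matrix.mulVec_mulVec] at this
        exact this
      have h3 := congrArg (fun w => D *ᵥ w) h2
      rwa [hDinv, Matrix.mulVec_zero] at h3
    · intro h
      have : (D * (A - t • 1) * D) *ᵥ v = 0 := by
        rw [Matrix.mul_assoc, ← Matrix.mulVec_mulVec, ← Matrix.mulVec_mulVec, h, mulVec_zero]
      rw [Matrix.smul_mulVec, this, smul_zero]
  rw [hker, Submodule.comap_equiv_eq_map_symm]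
  exact LinearEquiv.finrank_map_eq e.symm _


lemma pf_core {n : ℕ} (G : SimpleGraph (Fin n)) (hconn : G.Connected)
    (B : Matrix (Fin n) (Fin n) ℝ) (hsym : B.IsSymm)
    (hadj : ∀ i j, G.Adj i j → B i j ≠ 0)
    (hnn : ∀ i j, i ≠ j → 0 ≤ B i j)
    (μ : ℝ) (hker : 1 ≤ multOf B μ)
    (hub : ∀ t, 1 ≤ multOf B t → t ≤ μ) :
    multOf B μ = 1 := by
  have hherm : ∀ (C : Matrix (Fin n) (Fin n) ℝ), C.IsSymm → C.IsHermitian := by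
    intro C hC
    ext i j
    rw [conjTranspose_apply, star_trivial]
    exact hC.apply i j
  set M : Matrix (Fin n) (Fin n) ℝ := μ • (1 : Matrix (Fin n) (Fin n) ℝ) - B with hMdef
  have hMsymm : M.IsSymm := by
    rw [Matrix.IsSymm, transpose_sub, transpose_smul, transpose_one, hsym]
  have hMherm : M.IsHermitian := hherm M hMsymm
  have hMv : ∀ v : Fin n → ℝ, M *ᵥ v = μ • v - B *ᵥ v := by
    intro v
    rw [hMdef, sub_mulVec, smul_mulVec, one_mulVec]
  -- M is positive semidefinite
  have hMpsd : M.PosSemidef := by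
    apply hMherm.posSemidef_iff_eigenvalues_nonneg.mpr
    intro i
    set v : Fin n → ℝ := ⇑(hMherm.eigenvectorBasis i) with hvdef
    have hv0 : v ≠ 0 := by
      intro h
      apply hMherm.eigenvectorBasis.orthonormal.ne_zero i
      ext x
      exact congrFun h x
    have hv : M *ᵥ v = hMherm.eigenvalues i • v := hMherm.mulVec_eigenvectorBasis i
    have hBv : B *ᵥ v = (μ - hMherm.eigenvalues i) • v := by
      have h2 : μ • v - B *ᵥ v = hMherm.eigenvalues i • v := by rw [← hMv v, hv]
      rw [sub_smul, ← h2]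
      abel
    have hm : 1 ≤ multOf B (μ - hMherm.eigenvalues i) := by
      rw [multOf_pos_iff]
      refine ⟨v, hv0, ?_⟩
      rw [sub_mulVec, smul_mulVec, one_mulVec, hBv, sub_self]
    have := hub _ hm
    show (0:ℝ) ≤ hMherm.eigenvalues i
    linarith
  -- zero propagation along edges
  have hprop : ∀ w : Fin n → ℝ, B *ᵥ w = μ • w → (∀ i, 0 ≤ w i) →
      ∀ x y, G.Adj x y → w x = 0 → w y = 0 := by
    intro w hw hnnw x y hxy hx
    have hrow : ∑ j, B x j * w j = 0 := by
      have h1 : (B *ᵥ w) x = μ * w x := congrFun hw x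
      rw [hx, mul_zero] at h1
      rw [← h1]
      simp [Matrix.mulVec, dotProduct]
    have hterm : ∀ j ∈ Finset.univ, (0:ℝ) ≤ B x j * w j := by
      intro j _
      by_cases hj : j = x
      · rw [hj, hx, mul_zero]
      · exact mul_nonneg (hnn x j (Ne.symm hj)) (hnnw j)
    have := (Finset.sum_eq_zero_iff_of_nonneg hterm).mp hrow y (Finset.mem_univ y)
    rcases mul_eq_zero.mp this with h | h
    · exact absurd h (hadj x y hxy)
    · exact h
  -- positivity of nonnegative eigenvectors
  have hpos : ∀ w : Fin n → ℝ, B *ᵥ w = μ • w → (∀ i, 0 ≤ w i) → w ≠ 0 → ∀ i, w i ≠ 0 := by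
    intro w hw hnnw hw0 i hi
    have hex : ∃ i0, w i0 ≠ 0 := by
      by_contra h
      push_neg at h
      exact hw0 (funext h)
    obtain ⟨i0, hi0⟩ := hex
    obtain ⟨p⟩ := hconn i i0
    have hwalk : ∀ (x y : Fin n) (p : G.Walk x y), w x = 0 → w y = 0 := by
      intro x y p
      induction p with
      | nil => exact id
      | cons h q ih => exact fun hx => ih (hprop w hw hnnw _ _ h hx)
    exact hi0 (hwalk i i0 p hi)
  -- absolute value of an eigenvector is an eigenvector
  have habs : ∀ v : Fin n → ℝ, B *ᵥ v = μ • v →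
      B *ᵥ (fun i => |v i|) = μ • (fun i => |v i|) := by
    intro v hv
    set w : Fin n → ℝ := fun i => |v i| with hwdef
    have hMveq : M *ᵥ v = 0 := by rw [hMv, hv, sub_self]
    have hww : w ⬝ᵥ w = v ⬝ᵥ v := by
      simp only [dotProduct, hwdef, abs_mul_abs_self]
    have hBform : ∀ x : Fin n → ℝ, x ⬝ᵥ (B *ᵥ x) = ∑ i, ∑ j, x i * (B i j * x j) := by
      intro x
      simp only [dotProduct, Matrix.mulVec, Finset.mul_sum]
    have hquad : v ⬝ᵥ (B *ᵥ v) ≤ w ⬝ᵥ (B *ᵥ w) := by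
      rw [hBform, hBform]
      refine Finset.sum_le_sum fun i _ => Finset.sum_le_sum fun j _ => ?_
      by_cases hij : i = j
      · subst hij
        simp only [hwdef]
        rw [mul_comm (|v i|) _, mul_assoc, abs_mul_abs_self, mul_comm (v i) _, mul_assoc]
      · have h1 : v i * (B i j * v j) = B i j * (v i * v j) := by ring
        have h2 : w i * (B i j * w j) = B i j * (w i * w j) := by ring
        rw [h1, h2]
        apply mul_le_mul_of_nonneg_left _ (hnn i j hij)
        calc v i * v j ≤ |v i * v j| := le_abs_self _
        _ = w i * w j := by rw [abs_mul]
    have hwMw : w ⬝ᵥ (M *ᵥ w) ≤ 0 := by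
      have hvMv : v ⬝ᵥ (M *ᵥ v) = 0 := by rw [hMveq, dotProduct_zero]
      have e1 : w ⬝ᵥ (M *ᵥ w) = μ * (w ⬝ᵥ w) - w ⬝ᵥ (B *ᵥ w) := by
        rw [hMv, dotProduct_sub, dotProduct_smul]
        rfl
      have e2 : v ⬝ᵥ (M *ᵥ v) = μ * (v ⬝ᵥ v) - v ⬝ᵥ (B *ᵥ v) := by
        rw [hMv, dotProduct_sub, dotProduct_smul]
        rfl
      rw [e1, hww]
      rw [e2] at hvMv
      linarith
    have hge : 0 ≤ w ⬝ᵥ (M *ᵥ w) := by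
      have := hMpsd.dotProduct_mulVec_nonneg w
      simpa using this
    have hzero : M *ᵥ w = 0 := by
      rw [← hMpsd.dotProduct_mulVec_zero_iff w, star_trivial]
      linarith
    rw [hMv] at hzero
    exact (sub_eq_zero.mp hzero).symm
  -- finishing: multiplicity is exactly 1
  obtain ⟨i0⟩ := hconn.nonempty
  refine le_antisymm ?_ hker
  set K := LinearMap.ker (B - μ • (1 : Matrix (Fin n) (Fin n) ℝ)).mulVecLin with hK
  have hmemK : ∀ v : Fin n → ℝ, v ∈ K ↔ B *ᵥ v = μ • v := by
    intro v
    rw [hK, LinearMap.mem_ker, Matrix.mulVecLin_apply, sub_mulVec, smul_mulVec,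
      one_mulVec, sub_eq_zero]
  have hinj : Function.Injective ((LinearMap.proj i0 : (Fin n → ℝ) →ₗ[ℝ] ℝ).comp K.subtype) := by
    rw [← LinearMap.ker_eq_bot]
    rw [Submodule.eq_bot_iff]
    rintro ⟨v, hv⟩ hv0
    simp only [LinearMap.mem_ker, LinearMap.comp_apply, Submodule.subtype_apply,
      LinearMap.proj_apply] at hv0
    rw [Submodule.mk_eq_zero]
    by_contra hvne
    have hveq := (hmemK v).mp hv
    have habsv := habs v hveq
    have habsne : (fun i => |v i|) ≠ 0 := by
      intro h
      apply hvne
      ext i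
      have := congrFun h i
      simpa [abs_eq_zero] using this
    have := hpos (fun i => |v i|) habsv (fun i => abs_nonneg _) habsne i0
    simp only [hv0, abs_zero] at this
    exact this rfl
  calc multOf B μ = Module.finrank ℝ K := rfl
  _ ≤ Module.finrank ℝ ℝ := LinearMap.finrank_le_finrank_of_injective hinj
  _ = 1 := Module.finrank_self ℝ


lemma balance {n : ℕ} (G : SimpleGraph (Fin n)) (hconn : G.Connected)
    (hedges : G.edgeSet.ncard = n) (hodd : ¬ G.Colorable 2)
    (s : Fin n → Fin n → ℝ) (hs1 : ∀ i j, s i j = 1 ∨ s i j = -1)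
    (hssymm : ∀ i j, s i j = s j i) :
    ∃ (σ : ℝ) (dd : Fin n → ℝ), σ * σ = 1 ∧ (∀ i, dd i * dd i = 1) ∧
      ∀ i j, G.Adj i j → σ * (dd i * dd j) = s i j := by
  have hne : Nonempty (Fin n) := hconn.nonempty
  set r : Fin n := Classical.arbitrary (Fin n) with hr
  -- parents
  have hpar : ∀ x : Fin n, x ≠ r → ∃ y, G.Adj y x ∧ G.dist r y + 1 = G.dist r x := by
    intro x hx
    obtain ⟨p, hp⟩ := hconn.exists_walk_length_eq_dist r x
    cases hq : p.reverse with
    | nil => exact absurd rfl hx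
    | @cons _ y _ h q' =>
      refine ⟨y, h.symm, ?_⟩
      have hlen : q'.length + 1 = G.dist r x := by
        have := p.length_reverse
        rw [hq] at this
        simpa [SimpleGraph.Walk.length_cons, hp] using this
      have h1 : G.dist r y ≤ q'.length := by
        have := G.dist_le q'.reverse
        simpa using this
      have h2 : G.dist r x ≤ G.dist r y + 1 := by
        obtain ⟨w2, hw2⟩ := hconn.exists_walk_length_eq_dist r y
        have := G.dist_le (w2.concat h.symm)
        rwa [SimpleGraph.Walk.length_concat, hw2] at this
      omega
  set pa : Fin n → Fin n := fun x => if hx : x = r then r else (hpar x hx).choose with hpa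
  have pa_adj : ∀ x, x ≠ r → G.Adj (pa x) x := by
    intro x hx
    rw [hpa]
    simp only [dif_neg hx]
    exact (hpar x hx).choose_spec.1
  have pa_dist : ∀ x, x ≠ r → G.dist r (pa x) + 1 = G.dist r x := by
    intro x hx
    rw [hpa]
    simp only [dif_neg hx]
    exact (hpar x hx).choose_spec.2
  -- the potential function d
  set drec : ℕ → Fin n → ℝ := fun k => Nat.rec (motive := fun _ => Fin n → ℝ)
    (fun _ => 1) (fun _ ih x => s (pa x) x * ih (pa x)) k with hdrec
  set d : Fin n → ℝ := fun x => drec (G.dist r x) x with hd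
  have drec_succ : ∀ k x, drec (k + 1) x = s (pa x) x * drec k (pa x) := fun k x => rfl
  have drec_sq : ∀ k x, drec k x * drec k x = 1 := by
    intro k
    induction k with
    | zero => intro x; norm_num [hdrec]
    | succ k ih =>
      intro x
      rcases hs1 (pa x) x with h | h <;> rw [drec_succ, h] <;> nlinarith [ih (pa x)]
  have d_sq : ∀ x, d x * d x = 1 := fun x => drec_sq _ x
  have s_sq : ∀ i j, s i j * s i j = 1 := by
    intro i j
    rcases hs1 i j with h | h <;> rw [h] <;> norm_num
  have d_parent : ∀ x, x ≠ r → d x = s (pa x) x * d (pa x) := by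
    intro x hx
    rw [hd]
    simp only
    rw [← pa_dist x hx, drec_succ]
  -- parent edges
  set g : {x : Fin n // x ≠ r} → Sym2 (Fin n) := fun x => Sym2.mk (pa x.1) x.1 with hg
  have hginj : Function.Injective g := by
    rintro ⟨x, hx⟩ ⟨y, hy⟩ hxy
    rw [hg] at hxy
    simp only [Sym2.eq_iff] at hxy
    rcases hxy with ⟨_, h2⟩ | ⟨h1, h2⟩
    · exact Subtype.ext h2
    · exfalso
      have d1 := pa_dist x hx
      have d2 := pa_dist y hy
      rw [h1] at d1
      rw [← h2] at d2
      omega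
  have hrange_sub : Set.range g ⊆ G.edgeSet := by
    rintro e ⟨⟨x, hx⟩, rfl⟩
    exact G.mem_edgeSet.mpr (pa_adj x hx)
  have hn1 : 1 ≤ n := by
    have := Fintype.card_pos_iff.mpr hne
    simp at this; omega
  have hcard_range : (Set.range g).ncard = n - 1 := by
    rw [← Set.image_univ, Set.ncard_image_of_injective _ hginj, Set.ncard_univ]
    rw [Nat.card_eq_fintype_card, Fintype.card_subtype_compl]
    simp [Fintype.card_subtype_eq]
  have hdiff : (G.edgeSet \ Set.range g).ncard = 1 := by
    rw [Set.ncard_diff hrange_sub, hedges, hcard_range]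
    omega
  obtain ⟨e0, he0⟩ := Set.ncard_eq_one.mp hdiff
  obtain ⟨⟨u, v⟩, huv⟩ := e0.exists_rep
  have he0mem : e0 ∈ G.edgeSet \ Set.range g := by rw [he0]; exact rfl
  have huv' : Sym2.mk u v = e0 := huv
  have hadj_uv : G.Adj u v := by
    have hmem := he0mem.1
    rw [← huv'] at hmem
    exact G.mem_edgeSet.mp hmem
  -- edge classification
  have hclass : ∀ x y, G.Adj x y →
      (∃ z, z ≠ r ∧ Sym2.mk x y = Sym2.mk (pa z) z) ∨ Sym2.mk x y = e0 := by
    intro x y hxy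
    by_cases hmem : Sym2.mk x y ∈ Set.range g
    · obtain ⟨⟨z, hz⟩, hgz⟩ := hmem
      exact Or.inl ⟨z, hz, hgz.symm⟩
    · right
      have : Sym2.mk x y ∈ G.edgeSet \ Set.range g :=
        ⟨G.mem_edgeSet.mpr hxy, hmem⟩
      rw [he0] at this
      exact this
  -- parity of distances agrees on the extra edge, else G would be bipartite
  have hpar_uv : G.dist r u % 2 = G.dist r v % 2 := by
    by_contra hne2
    apply hodd
    refine ⟨SimpleGraph.Coloring.mk (fun x => ⟨G.dist r x % 2, Nat.mod_lt _ two_pos⟩) ?_⟩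
    intro x y hxy hcol
    have hcol2 : G.dist r x % 2 = G.dist r y % 2 := congrArg Fin.val hcol
    rcases hclass x y hxy with ⟨z, hz, hsym2⟩ | hsym2
    · have d1 := pa_dist z hz
      rcases Sym2.eq_iff.mp hsym2 with ⟨h1, h2⟩ | ⟨h1, h2⟩ <;> subst h1 <;> subst h2 <;> omega
    · rw [← huv'] at hsym2
      rcases Sym2.eq_iff.mp hsym2 with ⟨h1, h2⟩ | ⟨h1, h2⟩ <;> subst h1 <;> subst h2 <;>
        first
          | exact hne2 hcol2
          | exact hne2 hcol2.symm
  -- definition of σ and dd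
  refine ⟨s u v * (d u * d v), fun x => if G.dist r x % 2 = 0 then d x else
    s u v * (d u * d v) * d x, ?_, ?_, ?_⟩
  · rw [show s u v * (d u * d v) * (s u v * (d u * d v))
        = (s u v * s u v) * ((d u * d u) * (d v * d v)) by ring, s_sq, d_sq, d_sq]
    norm_num
  · intro x
    beta_reduce
    by_cases hx : G.dist r x % 2 = 0
    · rw [if_pos hx]; exact d_sq x
    · rw [if_neg hx]
      rw [show s u v * (d u * d v) * d x * (s u v * (d u * d v) * d x)
        = (s u v * s u v) * ((d u * d u) * ((d v * d v) * (d x * d x))) by ring,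
        s_sq, d_sq, d_sq, d_sq]
      norm_num
  · intro x y hxy
    beta_reduce
    set σ : ℝ := s u v * (d u * d v) with hσ
    have hσsq : σ * σ = 1 := by
      rw [hσ, show s u v * (d u * d v) * (s u v * (d u * d v))
        = (s u v * s u v) * ((d u * d u) * (d v * d v)) by ring, s_sq, d_sq, d_sq]
      norm_num
    rcases hclass x y hxy with ⟨z, hz, hsym2⟩ | hsym2
    · -- parent edge
      have d1 := pa_dist z hz
      have hprod : σ * ((if G.dist r (pa z) % 2 = 0 then d (pa z) else σ * d (pa z)) *
            (if G.dist r z % 2 = 0 then d z else σ * d z)) = s (pa z) z := by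
        have hparity : (G.dist r (pa z) % 2 = 0 ∧ ¬ G.dist r z % 2 = 0) ∨
            (¬ G.dist r (pa z) % 2 = 0 ∧ G.dist r z % 2 = 0) := by omega
        have hdz := d_parent z hz
        rcases hparity with ⟨hp1, hp2⟩ | ⟨hp1, hp2⟩
        · rw [if_pos hp1, if_neg hp2, hdz,
            show σ * (d (pa z) * (σ * (s (pa z) z * d (pa z))))
              = (σ * σ) * ((d (pa z) * d (pa z)) * s (pa z) z) by ring,
            hσsq, d_sq]
          norm_num
        · rw [if_neg hp1, if_pos hp2, hdz,
            show σ * (σ * d (pa z) * (s (pa z) z * d (pa z)))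
              = (σ * σ) * ((d (pa z) * d (pa z)) * s (pa z) z) by ring,
            hσsq, d_sq]
          norm_num
      rcases Sym2.eq_iff.mp hsym2 with ⟨h1, h2⟩ | ⟨h1, h2⟩
      · rw [h1, h2]
        exact hprod
      · rw [h1, h2, hssymm z (pa z), mul_comm
          (if G.dist r z % 2 = 0 then d z else σ * d z)
          (if G.dist r (pa z) % 2 = 0 then d (pa z) else σ * d (pa z))]
        exact hprod
    · -- the extra edge
      rw [← huv'] at hsym2
      have hprod : σ * ((if G.dist r u % 2 = 0 then d u else σ * d u) *
            (if G.dist r v % 2 = 0 then d v else σ * d v)) = s u v := by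
        have hparity : (G.dist r u % 2 = 0 ∧ G.dist r v % 2 = 0) ∨
            (¬ G.dist r u % 2 = 0 ∧ ¬ G.dist r v % 2 = 0) := by omega
        rcases hparity with ⟨hp1, hp2⟩ | ⟨hp1, hp2⟩
        · rw [if_pos hp1, if_pos hp2, hσ,
            show s u v * (d u * d v) * (d u * d v)
              = s u v * ((d u * d u) * (d v * d v)) by ring, d_sq, d_sq]
          norm_num
        · rw [if_neg hp1, if_neg hp2,
            show σ * (σ * d u * (σ * d v)) = (σ * σ) * (σ * (d u * d v)) by ring,
            hσsq, one_mul, hσ,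
            show s u v * (d u * d v) * (d u * d v)
              = s u v * ((d u * d u) * (d v * d v)) by ring, d_sq, d_sq]
          norm_num
      rcases Sym2.eq_iff.mp hsym2 with ⟨h1, h2⟩ | ⟨h1, h2⟩
      · rw [h1, h2]
        exact hprod
      · rw [h1, h2, hssymm v u, mul_comm
          (if G.dist r v % 2 = 0 then d v else σ * d v)
          (if G.dist r u % 2 = 0 then d u else σ * d u)]
        exact hprod


/-- If `G` is a connected unicyclic graph (number of edges = number of vertices)
whose unique cycle is odd (equivalently `G` is not bipartite), then for every
`A ∈ S(G)` at least one of the smallest and the largest eigenvalue of `A` is simple. -/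
theorem extreme_eigenvalue_simple_of_odd_unicyclic {n : ℕ}
    (G : SimpleGraph (Fin n)) (hconn : G.Connected)
    (hedges : G.edgeSet.ncard = n) (hodd : ¬ G.Colorable 2)
    (A : Matrix (Fin n) (Fin n) ℝ) (hA : InS G A)
    (lmin lmax : ℝ)
    (hminEig : 1 ≤ multOf A lmin) (hmaxEig : 1 ≤ multOf A lmax)
    (hmin : ∀ t, 1 ≤ multOf A t → lmin ≤ t)
    (hmax : ∀ t, 1 ≤ multOf A t → t ≤ lmax) :
    multOf A lmin = 1 ∨ multOf A lmax = 1 := by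
  obtain ⟨hAsymm, hApat⟩ := hA
  set s : Fin n → Fin n → ℝ := fun i j => if 0 < A i j then 1 else -1 with hs
  have hAs : ∀ i j, A j i = A i j := fun i j => hAsymm.apply i j
  have hs1 : ∀ i j, s i j = 1 ∨ s i j = -1 := by
    intro i j
    by_cases h : 0 < A i j <;> simp [hs, h]
  have hssymm : ∀ i j, s i j = s j i := by
    intro i j
    rw [hs]
    simp only
    rw [hAs i j]
  obtain ⟨σ, dd, hσsq, hddsq, hedge⟩ := balance G hconn hedges hodd s hs1 hssymm
  set B : Matrix (Fin n) (Fin n) ℝ := σ • (diagonal dd * A * diagonal dd) with hB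
  have hBentry : ∀ i j, B i j = σ * dd i * A i j * dd j := by
    intro i j
    rw [hB]
    simp only [Matrix.smul_apply, smul_eq_mul, Matrix.mul_diagonal, Matrix.diagonal_mul]
    ring
  have hBs : ∀ i j, G.Adj i j → B i j = s i j * A i j := by
    intro i j hadj
    rw [hBentry, show σ * dd i * A i j * dd j = (σ * (dd i * dd j)) * A i j by ring,
      hedge i j hadj]
  have hBsymm : B.IsSymm := by
    rw [Matrix.IsSymm]
    ext i j
    rw [Matrix.transpose_apply, hBentry, hBentry, hAs j i]
    ring
  have hBnn : ∀ i j, i ≠ j → 0 ≤ B i j := by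
    intro i j hij
    by_cases hadj : G.Adj i j
    · rw [hBs i j hadj]
      by_cases h : 0 < A i j
      · rw [hs]
        simp only [if_pos h]
        linarith
      · rw [hs]
        simp only [if_neg h]
        push_neg at h
        linarith
    · have : A i j = 0 := by
        by_contra h
        exact hadj ((hApat i j hij).mp h)
      rw [hBentry, this]
      ring_nf
      exact le_refl 0
  have hBadj : ∀ i j, G.Adj i j → B i j ≠ 0 := by
    intro i j hadj
    rw [hBs i j hadj]
    have hA0 : A i j ≠ 0 := (hApat i j (G.ne_of_adj hadj)).mpr hadj
    rcases hs1 i j with h | h <;> rw [h] <;> simpa using hA0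
  have hmult : ∀ t, multOf B (σ * t) = multOf A t := fun t =>
    multOf_conj A dd hddsq σ hσsq t
  have hmult' : ∀ t, multOf B t = multOf A (σ * t) := by
    intro t
    conv_lhs => rw [show t = σ * (σ * t) by rw [← mul_assoc, hσsq, one_mul]]
    exact hmult (σ * t)
  rcases mul_self_eq_one_iff.mp hσsq with hσ1 | hσ1
  · -- σ = 1 : the largest eigenvalue is simple
    right
    have h1 : multOf B lmax = multOf A lmax := by
      rw [hmult', hσ1, one_mul]
    rw [← h1]
    apply pf_core G hconn B hBsymm hBadj hBnn lmax
    · rw [h1]; exact hmaxEig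
    · intro t ht
      rw [hmult', hσ1, one_mul] at ht
      exact hmax t ht
  · -- σ = -1 : the smallest eigenvalue is simple
    left
    have h1 : multOf B (-lmin) = multOf A lmin := by
      rw [hmult', hσ1]
      norm_num
    rw [← h1]
    apply pf_core G hconn B hBsymm hBadj hBnn (-lmin)
    · rw [h1]; exact hminEig
    · intro t ht
      rw [hmult', hσ1] at ht
      have := hmin (-1 * t) ht
      linarith
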